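/- Let k be odd with two disjoint k-sets S, R ⊆ [n], and let F be the 3-uniform hypergraph on [n] whose edges are all triples T with |T ∩ S| ≥ 2 and T ∩ R = ∅, together with all triples T with |T ∩ R| ≥ 2 and T ∩ S = ∅. Then F contains no k-star F_k, i.e., no vertex v has k pairwise disjoint edges in its link. -/
import Mathlib


open Finset

/-- The extremal construction `𝓕_k^o`: triples meeting `S` in at least two vertices and
avoiding `R`, together with triples meeting `R` in at least two vertices and avoiding `S`. -/
def extremalOdd (n : ℕ) (S R : Finset (Fin n)) : Finset (Finset (Fin n)) :=
  (univ.powersetCard 3).filter fun T =>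
    (2 ≤ (T ∩ S).card ∧ T ∩ R = ∅) ∨ (2 ≤ (T ∩ R).card ∧ T ∩ S = ∅)

/-- The 3-graph `H` contains a `k`-star: a vertex `v` and `k` pairwise disjoint pairs
avoiding `v` each of which forms an edge of `H` with `v`. -/
def HasStar {n : ℕ} (H : Finset (Finset (Fin n))) (k : ℕ) : Prop :=
  ∃ (v : Fin n) (P : Finset (Finset (Fin n))),
    P.card = k ∧ (∀ p ∈ P, p.card = 2 ∧ v ∉ p ∧ insert v p ∈ H) ∧
    (∀ p ∈ P, ∀ q ∈ P, p ≠ q → Disjoint p q)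

lemma sum_inter_card_le {n : ℕ} (P : Finset (Finset (Fin n))) (A : Finset (Fin n))
    (hd : ∀ p ∈ P, ∀ q ∈ P, p ≠ q → Disjoint p q) :
    ∑ p ∈ P, (p ∩ A).card ≤ A.card := by
  have h := Finset.card_biUnion (s := P) (t := fun p => p ∩ A)
    (fun p hp q hq hne => Disjoint.mono inf_le_left inf_le_left (hd p hp q hq hne))
  rw [← h]
  apply card_le_card
  intro x hx
  simp only [mem_biUnion, mem_inter] at hx
  obtain ⟨p, _, _, hx⟩ := hx
  exact hx

lemma inter_erase_of_notMem' {n : ℕ} {p A : Finset (Fin n)} {v : Fin n} (h : v ∉ p) :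
    p ∩ A.erase v = p ∩ A := by
  ext x
  simp only [mem_inter, mem_erase]
  constructor
  · rintro ⟨hx, _, hA⟩; exact ⟨hx, hA⟩
  · rintro ⟨hx, hA⟩; exact ⟨hx, fun e => h (e ▸ hx), hA⟩

/-- Center of the star lies in a set `A` of size `k`: then each pair meets `A.erase v`,
and disjointness gives `k ≤ k - 1`, contradiction. -/
lemma center_in_case {n k : ℕ} (hk1 : 1 ≤ k) {A : Finset (Fin n)} (hA : A.card = k)
    {v : Fin n} (hv : v ∈ A) {P : Finset (Finset (Fin n))} (hcard : P.card = k)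
    (hmem : ∀ p ∈ P, v ∉ p ∧ 1 ≤ (p ∩ A).card)
    (hd : ∀ p ∈ P, ∀ q ∈ P, p ≠ q → Disjoint p q) : False := by
  have hsum : ∑ p ∈ P, (p ∩ A.erase v).card ≤ (A.erase v).card :=
    sum_inter_card_le P (A.erase v) hd
  have hone : ∀ p ∈ P, 1 ≤ (p ∩ A.erase v).card := by
    intro p hp
    rw [inter_erase_of_notMem' (hmem p hp).1]
    exact (hmem p hp).2
  have hge : P.card ≤ ∑ p ∈ P, (p ∩ A.erase v).card := by
    calc P.card = ∑ _p ∈ P, 1 := by simp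
    _ ≤ _ := Finset.sum_le_sum hone
  rw [card_erase_of_mem hv, hA, hcard] at *
  omega

/-- for odd `k` and disjoint `k`-sets `S, R ⊆ [n]`, the 3-graph whose edges
are the triples meeting `S` in at least two vertices and avoiding `R`, together with the
triples meeting `R` in at least two vertices and avoiding `S`, contains no `k`-star. -/
theorem stmt_9 (n k : ℕ) (hk : Odd k) (hn : 2 * k ≤ n)
    (S R : Finset (Fin n)) (hS : S.card = k) (hR : R.card = k) (hSR : Disjoint S R) :
    ¬ HasStar (extremalOdd n S R) k := by
  rintro ⟨v, P, hcard, hP, hdisj⟩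
  have hk1 : 1 ≤ k := hk.pos
  have hedge : ∀ p ∈ P, (2 ≤ ((insert v p) ∩ S).card ∧ (insert v p) ∩ R = ∅) ∨
      (2 ≤ ((insert v p) ∩ R).card ∧ (insert v p) ∩ S = ∅) := by
    intro p hp
    have h := (hP p hp).2.2
    simp only [extremalOdd, mem_filter] at h
    exact h.2
  by_cases hvS : v ∈ S
  · refine center_in_case hk1 hS hvS hcard (fun p hp => ⟨(hP p hp).2.1, ?_⟩) hdisj
    have hvp : v ∉ p := (hP p hp).2.1
    rcases hedge p hp with ⟨hs, _⟩ | ⟨_, hs⟩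
    · rw [insert_inter_of_mem hvS,
        card_insert_of_notMem (fun h => hvp (mem_inter.mp h).1)] at hs
      omega
    · exact absurd (mem_inter.mpr ⟨mem_insert_self v p, hvS⟩)
        (by rw [hs]; exact notMem_empty v)
  by_cases hvR : v ∈ R
  · refine center_in_case hk1 hR hvR hcard (fun p hp => ⟨(hP p hp).2.1, ?_⟩) hdisj
    have hvp : v ∉ p := (hP p hp).2.1
    rcases hedge p hp with ⟨_, hs⟩ | ⟨hs, _⟩
    · exact absurd (mem_inter.mpr ⟨mem_insert_self v p, hvR⟩)
        (by rw [hs]; exact notMem_empty v)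
    · rw [insert_inter_of_mem hvR,
        card_insert_of_notMem (fun h => hvp (mem_inter.mp h).1)] at hs
      omega
  -- case v ∉ S ∪ R : every pair is entirely inside S or entirely inside R
  have hsub : ∀ p ∈ P, p ⊆ S ∨ p ⊆ R := by
    intro p hp
    have h2 : p.card = 2 := (hP p hp).1
    rcases hedge p hp with ⟨hs, _⟩ | ⟨hs, _⟩
    · rw [insert_inter_of_notMem hvS] at hs
      exact Or.inl (inter_eq_left.mp (eq_of_subset_of_card_le inter_subset_left (by omega)))
    · rw [insert_inter_of_notMem hvR] at hs
      exact Or.inr (inter_eq_left.mp (eq_of_subset_of_card_le inter_subset_left (by omega)))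
  set PS := P.filter (fun p => p ⊆ S) with hPS
  set PR := P.filter (fun p => p ⊆ R) with hPR
  have hcover : P ⊆ PS ∪ PR := by
    intro p hp
    rcases hsub p hp with h | h
    · exact mem_union_left _ (mem_filter.mpr ⟨hp, h⟩)
    · exact mem_union_right _ (mem_filter.mpr ⟨hp, h⟩)
  have hle : k ≤ PS.card + PR.card := by
    calc k = P.card := hcard.symm
    _ ≤ (PS ∪ PR).card := card_le_card hcover
    _ ≤ PS.card + PR.card := card_union_le _ _
  have hdS : ∀ p ∈ PS, ∀ q ∈ PS, p ≠ q → Disjoint p q := fun p hp q hq h =>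
    hdisj p (mem_filter.mp hp).1 q (mem_filter.mp hq).1 h
  have hdR : ∀ p ∈ PR, ∀ q ∈ PR, p ≠ q → Disjoint p q := fun p hp q hq h =>
    hdisj p (mem_filter.mp hp).1 q (mem_filter.mp hq).1 h
  have hbS : 2 * PS.card ≤ k := by
    have := sum_inter_card_le PS S hdS
    rw [hS] at this
    refine le_trans (le_of_eq ?_) this
    rw [Finset.sum_congr rfl (fun p hp => ?_)]
    · rw [Finset.sum_const, smul_eq_mul, mul_comm]
    · rw [inter_eq_left.mpr (mem_filter.mp hp).2]
      exact (hP p (mem_filter.mp hp).1).1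
  have hbR : 2 * PR.card ≤ k := by
    have := sum_inter_card_le PR R hdR
    rw [hR] at this
    refine le_trans (le_of_eq ?_) this
    rw [Finset.sum_congr rfl (fun p hp => ?_)]
    · rw [Finset.sum_const, smul_eq_mul, mul_comm]
    · rw [inter_eq_left.mpr (mem_filter.mp hp).2]
      exact (hP p (mem_filter.mp hp).1).1
  obtain ⟨m, hm⟩ := hk
  omega
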